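/- If every string in an l-subset L has no two consecutive equal characters, then every string in f(L,i,j) also has no two consecutive equal characters, for any 1 ≤ i < j ≤ l. -/

import Mathlib

def fStr (s : List (Fin 4)) (i j : ℕ) : Set (List (Fin 4)) :=
  { t | ∃ c : Fin 4, c ∉ (s.take j).drop (i - 1) ∧ t = s.take i ++ c :: s.drop (j - 1) }

def fSet (L : Set (List (Fin 4))) (i j : ℕ) : Set (List (Fin 4)) :=
  ⋃ s ∈ L, fStr s i j

def Step (L L' : Set (List (Fin 4))) : Prop :=
  ∃ l i j, (∀ s ∈ L, s.length = l) ∧ 1 ≤ i ∧ i < j ∧ j ≤ l ∧ L' = fSet L i j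

def Derives : Set (List (Fin 4)) → Set (List (Fin 4)) → Prop :=
  Relation.TransGen Step
theorem stmt6 (L : Set (List (Fin 4))) (l i j : ℕ)
    (hL : ∀ s ∈ L, s.length = l) (hproper : ∀ s ∈ L, List.Chain' (· ≠ ·) s)
    (hi : 1 ≤ i) (hij : i < j) (hj : j ≤ l) :
    ∀ t ∈ fSet L i j, List.Chain' (· ≠ ·) t := by
  rintro t ht
  simp only [fSet, fStr, Set.mem_iUnion, Set.mem_setOf_eq] at ht
  obtain ⟨s, hsL, c, hc, rfl⟩ := ht
  have hs : s.length = l := hL s hsL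
  have hch := hproper s hsL
  have hi1 : i - 1 < s.length := by omega
  have hj1 : j - 1 < s.length := by omega
  have hmem1 : s[i-1] ∈ (s.take j).drop (i-1) := by
    rw [List.mem_iff_getElem]
    refine ⟨0, by simp; omega, ?_⟩
    simp [List.getElem_drop, List.getElem_take]
  have hmem2 : s[j-1] ∈ (s.take j).drop (i-1) := by
    rw [List.mem_iff_getElem]
    refine ⟨(j-1)-(i-1), by simp; omega, ?_⟩
    simp only [List.getElem_drop, List.getElem_take]
    congr 1
    omega
  have hne1 : s[i-1] ≠ c := fun h => hc (h ▸ hmem1)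
  have hne2 : c ≠ s[j-1] := fun h => hc (h ▸ hmem2)
  unfold List.Chain' at hch ⊢
  rw [List.isChain_append]
  refine ⟨hch.take i, ?_, ?_⟩
  · rw [List.isChain_cons]
    refine ⟨?_, hch.drop _⟩
    intro y hy
    rw [List.head?_drop] at hy
    simp [hj1] at hy
    exact hy ▸ hne2
  · intro x hx y hy
    simp at hy
    rw [List.getLast?_eq_getElem?] at hx
    have hlen : (s.take i).length = i := by simp; omega
    rw [hlen] at hx
    simp [List.getElem?_eq_getElem (show i - 1 < (s.take i).length by rw [hlen]; omega)] at hx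
    subst hy
    have : x = s[i-1] := by simp [hx, List.getElem_take]
    exact this ▸ hne1
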